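/- Let (γ_n)_{n≥0} be positive reals with inf_n γ_n > 0 and (a_n)_{n≥0} nonnegative reals, not all zero, with Σ_n a_n/γ_n < ∞; define X(0,μ,k₂) := Σ_n a_n(γ_n + 2k₂)/((γ_n + 2k₂)² + μ) and Y(0,μ,k₂) := Σ_n a_n/((γ_n + 2k₂)² + μ). Let ρ₀ > 0, 0 < k₁ < 2ρ₀/3, τ > Σ_n a_n/γ_n², and k₂ > 0 with X(0,0,k₂) > ρ₀ − 2k₁ and X(0,0,k₂) ≤ ρ₀ − 3k₁/2 (i.e. k₂ ≥ k̂₂*, so that λ₁(α) < α for all α > 0). Set α₀ := k₁/(τ − Y(0,0,k₂)); let λ₁(α) be the unique positive solution of X(0, λ₁², k₂) = ρ₀ − k₁(1 + α²/(α² + λ₁²)) for α > 0, and λ₂(α) the unique positive solution of Y(0, λ₂², k₂) = τ − k₁α/(α² + λ₂²) for α ∈ (0,α₀), with α₂ ∈ (0,α₀) the unique point where λ₂(α₂) = α₂. Then there exists a unique α* ∈ (0,α₀) with λ₁(α*) = λ₂(α*); moreover α₂ < α* < α₀ and λ₁(α*) < α*. -/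

import Mathlib

/-- If a continuous function on an open interval has no zeros and is negative somewhere,
it is negative everywhere on the interval. -/
lemma hopf_sign_neg {u v : ℝ} (f : ℝ → ℝ) (hf : ContinuousOn f (Set.Ioo u v))
    (hz : ∀ x ∈ Set.Ioo u v, f x ≠ 0) {x₀ x : ℝ} (hx₀ : x₀ ∈ Set.Ioo u v)
    (hx : x ∈ Set.Ioo u v) (h0 : f x₀ < 0) : f x < 0 := by
  by_contra h
  push_neg at h
  have hfx : 0 < f x := lt_of_le_of_ne h (fun he => hz x hx he.symm)
  rcases le_total x x₀ with hle | hle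
  · have hsub : Set.Icc x x₀ ⊆ Set.Ioo u v := Set.Icc_subset_Ioo hx.1 hx₀.2
    obtain ⟨y, hy, hy0⟩ := intermediate_value_Icc' hle (hf.mono hsub)
      (Set.mem_Icc.mpr ⟨h0.le, hfx.le⟩)
    exact hz y (hsub hy) hy0
  · have hsub : Set.Icc x₀ x ⊆ Set.Ioo u v := Set.Icc_subset_Ioo hx₀.1 hx.2
    obtain ⟨y, hy, hy0⟩ := intermediate_value_Icc hle (hf.mono hsub)
      (Set.mem_Icc.mpr ⟨h0.le, hfx.le⟩)
    exact hz y (hsub hy) hy0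

/-- Continuity of the positive root of a family of strictly decreasing functions. -/
lemma hopf_root_cont {S : Set ℝ} (hS : IsOpen S) (h : ℝ → ℝ → ℝ) (r : ℝ → ℝ)
    (hr : ∀ α ∈ S, 0 < r α ∧ h α (r α) = 0 ∧ ∀ l, 0 < l → h α l = 0 → l = r α)
    (hcl : ∀ α ∈ S, Continuous (h α))
    (hca : ∀ l : ℝ, 0 < l → Continuous (fun β => h β l))
    (hanti : ∀ α ∈ S, StrictAntiOn (h α) (Set.Ioi 0)) :
    ContinuousOn r S := by
  rw [Metric.continuousOn_iff]
  intro α hα ε hε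
  obtain ⟨hrpos, hroot, _⟩ := hr α hα
  set ε0 := min (ε / 2) (r α / 2) with hε0def
  have hε0 : 0 < ε0 := lt_min (by linarith) (by linarith)
  have hε0le : ε0 ≤ ε / 2 := min_le_left _ _
  have hε0le2 : ε0 ≤ r α / 2 := min_le_right _ _
  have hlm : 0 < r α - ε0 := by linarith
  have hminus : 0 < h α (r α - ε0) := by
    have h1 : r α - ε0 ∈ Set.Ioi (0:ℝ) := Set.mem_Ioi.mpr hlm
    have h2 : r α ∈ Set.Ioi (0:ℝ) := Set.mem_Ioi.mpr hrpos
    have := hanti α hα h1 h2 (by linarith)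
    rwa [hroot] at this
  have hplus : h α (r α + ε0) < 0 := by
    have h1 : r α ∈ Set.Ioi (0:ℝ) := Set.mem_Ioi.mpr hrpos
    have h2 : r α + ε0 ∈ Set.Ioi (0:ℝ) := Set.mem_Ioi.mpr (by linarith)
    have := hanti α hα h1 h2 (by linarith)
    rwa [hroot] at this
  have hU : IsOpen ({β | 0 < h β (r α - ε0)} ∩ ({β | h β (r α + ε0) < 0} ∩ S)) := by
    refine IsOpen.inter ?_ (IsOpen.inter ?_ hS)
    · exact isOpen_lt continuous_const (hca _ hlm)
    · exact isOpen_lt (hca _ (by linarith)) continuous_const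
  have hmem : α ∈ ({β | 0 < h β (r α - ε0)} ∩ ({β | h β (r α + ε0) < 0} ∩ S)) :=
    ⟨hminus, hplus, hα⟩
  obtain ⟨δ, hδ, hball⟩ := Metric.isOpen_iff.mp hU α hmem
  refine ⟨δ, hδ, fun β hβS hβd => ?_⟩
  obtain ⟨hb1, hb2, _⟩ := hball (Metric.mem_ball.mpr hβd)
  obtain ⟨l, hlmem, hl0⟩ := intermediate_value_Icc' (by linarith : r α - ε0 ≤ r α + ε0)
    ((hcl β hβS).continuousOn) (Set.mem_Icc.mpr ⟨hb2.le, hb1.le⟩)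
  have hlpos : 0 < l := lt_of_lt_of_le hlm hlmem.1
  obtain ⟨_, _, huβ⟩ := hr β hβS
  have hlr : l = r β := huβ l hlpos hl0
  rw [Real.dist_eq, abs_lt]
  constructor
  · have := hlmem.1; rw [hlr] at this; linarith
  · have := hlmem.2; rw [hlr] at this; linarith


set_option maxHeartbeats 2000000

/-- Existence and uniqueness of the limiting Hopf point `α* ∈ (0, α₀)`, the unique
intersection of the two frequency curves `λ₁` and `λ₂`; moreover `α₂ < α* < α₀` and
`λ₁(α*) < α*`. -/
theorem stmt_15 (γ a : ℕ → ℝ) (c : ℝ) (hc : 0 < c) (hγ : ∀ n, c ≤ γ n)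
    (ha : ∀ n, 0 ≤ a n) (hne : ∃ n, a n ≠ 0)
    (hsum : Summable fun n => a n / γ n)
    (ρ₀ k₁ k₂ τ : ℝ) (hρ : 0 < ρ₀) (hk₁ : 0 < k₁) (hk₁' : k₁ < 2 * ρ₀ / 3) (hk₂ : 0 < k₂)
    (hτ : (∑' n, a n / (γ n) ^ 2) < τ)
    (X Y : ℝ → ℝ)
    (hX : ∀ μ, X μ = ∑' n, a n * (γ n + 2 * k₂) / ((γ n + 2 * k₂) ^ 2 + μ))
    (hY : ∀ μ, Y μ = ∑' n, a n / ((γ n + 2 * k₂) ^ 2 + μ))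
    (h1 : ρ₀ - 2 * k₁ < X 0) (h2 : X 0 ≤ ρ₀ - 3 * k₁ / 2)
    (α₀ : ℝ) (hα₀ : α₀ = k₁ / (τ - Y 0))
    (lam₁ lam₂ : ℝ → ℝ)
    (hlam₁ : ∀ α : ℝ, 0 < α → 0 < lam₁ α ∧
      X ((lam₁ α) ^ 2) = ρ₀ - k₁ * (1 + α ^ 2 / (α ^ 2 + (lam₁ α) ^ 2)) ∧
      ∀ l : ℝ, 0 < l → X (l ^ 2) = ρ₀ - k₁ * (1 + α ^ 2 / (α ^ 2 + l ^ 2)) → l = lam₁ α)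
    (hlam₂ : ∀ α ∈ Set.Ioo 0 α₀, 0 < lam₂ α ∧
      Y ((lam₂ α) ^ 2) = τ - k₁ * α / (α ^ 2 + (lam₂ α) ^ 2) ∧
      ∀ l : ℝ, 0 < l → Y (l ^ 2) = τ - k₁ * α / (α ^ 2 + l ^ 2) → l = lam₂ α)
    (α₂ : ℝ) (hα₂ : α₂ ∈ Set.Ioo 0 α₀) (hfix : lam₂ α₂ = α₂)
    (huniq : ∀ β ∈ Set.Ioo 0 α₀, lam₂ β = β → β = α₂) :
    (∃! αs : ℝ, αs ∈ Set.Ioo 0 α₀ ∧ lam₁ αs = lam₂ αs) ∧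
    ∀ αs ∈ Set.Ioo 0 α₀, lam₁ αs = lam₂ αs → α₂ < αs ∧ lam₁ αs < αs := by
  obtain ⟨n₀, hn₀⟩ := hne
  have hn₀pos : 0 < a n₀ := lt_of_le_of_ne (ha n₀) (Ne.symm hn₀)
  set b : ℕ → ℝ := fun n => γ n + 2 * k₂ with hbdef
  have hγpos : ∀ n, 0 < γ n := fun n => lt_of_lt_of_le hc (hγ n)
  have hγb : ∀ n, γ n ≤ b n := fun n => by simp only [hbdef]; linarith
  have hbpos : ∀ n, 0 < b n := fun n => lt_of_lt_of_le (hγpos n) (hγb n)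
  set fX : ℕ → ℝ → ℝ := fun n μ => a n * b n / (b n ^ 2 + max μ 0) with hfXdef
  set fY : ℕ → ℝ → ℝ := fun n μ => a n / (b n ^ 2 + max μ 0) with hfYdef
  have hden : ∀ (n : ℕ) (μ : ℝ), 0 < b n ^ 2 + max μ 0 := fun n μ =>
    add_pos_of_pos_of_nonneg (pow_pos (hbpos n) 2) (le_max_right _ _)
  have hfX_nonneg : ∀ n μ, 0 ≤ fX n μ := fun n μ =>
    div_nonneg (mul_nonneg (ha n) (hbpos n).le) (hden n μ).le
  have hfY_nonneg : ∀ n μ, 0 ≤ fY n μ := fun n μ => div_nonneg (ha n) (hden n μ).le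
  have hfX_le : ∀ n μ, fX n μ ≤ a n / γ n := by
    intro n μ
    have h1 : a n * b n / (b n ^ 2 + max μ 0) ≤ a n * b n / (b n ^ 2) := by
      gcongr
      · exact mul_nonneg (ha n) (hbpos n).le
      · exact pow_pos (hbpos n) 2
      · exact le_add_of_nonneg_right (le_max_right _ _)
    have h2 : a n * b n / (b n ^ 2) = a n / b n := by
      rw [pow_two, mul_div_mul_right _ _ (hbpos n).ne']
    have h3 : a n / b n ≤ a n / γ n := by gcongr; exacts [ha n, hγpos n, hγb n]
    calc fX n μ ≤ a n * b n / (b n ^ 2) := h1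
      _ = a n / b n := h2
      _ ≤ a n / γ n := h3
  have hfY_le : ∀ n μ, fY n μ ≤ a n / γ n ^ 2 := by
    intro n μ
    have : γ n ^ 2 ≤ b n ^ 2 + max μ 0 := by
      have := pow_le_pow_left₀ (hγpos n).le (hγb n) 2
      have := le_max_right μ 0
      linarith
    show a n / (b n ^ 2 + max μ 0) ≤ a n / γ n ^ 2
    gcongr
    exacts [ha n, pow_pos (hγpos n) 2]

  have hsum_aγ2 : Summable (fun n => a n / γ n ^ 2) := by
    refine Summable.of_nonneg_of_le (fun n => div_nonneg (ha n) (sq_nonneg _))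
      (fun n => ?_) (hsum.mul_right (1 / c))
    have h1 : a n / γ n ^ 2 = a n / γ n * (1 / γ n) := by
      rw [pow_two, div_mul_eq_div_mul_one_div]
    rw [h1]
    have h2 : 1 / γ n ≤ 1 / c := one_div_le_one_div_of_le hc (hγ n)
    exact mul_le_mul_of_nonneg_left h2 (div_nonneg (ha n) (hγpos n).le)
  have hsumX : ∀ μ, Summable (fun n => fX n μ) := fun μ =>
    Summable.of_nonneg_of_le (fun n => hfX_nonneg n μ) (fun n => hfX_le n μ) hsum
  have hsumY : ∀ μ, Summable (fun n => fY n μ) := fun μ =>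
    Summable.of_nonneg_of_le (fun n => hfY_nonneg n μ) (fun n => hfY_le n μ) hsum_aγ2
  set Xc : ℝ → ℝ := fun μ => ∑' n, fX n μ with hXcdef
  set Yc : ℝ → ℝ := fun μ => ∑' n, fY n μ with hYcdef
  have hXc_cont : Continuous Xc := by
    refine continuous_tsum (fun n => ?_) hsum (fun n μ => ?_)
    · exact continuous_const.div
        (continuous_const.add (continuous_id.max continuous_const))
        (fun μ => (hden n μ).ne')
    · rw [Real.norm_eq_abs, abs_of_nonneg (hfX_nonneg n μ)]; exact hfX_le n μ
  have hYc_cont : Continuous Yc := by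
    refine continuous_tsum (fun n => ?_) hsum_aγ2 (fun n μ => ?_)
    · exact continuous_const.div
        (continuous_const.add (continuous_id.max continuous_const))
        (fun μ => (hden n μ).ne')
    · rw [Real.norm_eq_abs, abs_of_nonneg (hfY_nonneg n μ)]; exact hfY_le n μ
  have hXc_anti : Antitone Xc := by
    intro μ μ' hμ
    refine Summable.tsum_le_tsum (fun n => ?_) (hsumX μ') (hsumX μ)
    show a n * b n / (b n ^ 2 + max μ' 0) ≤ a n * b n / (b n ^ 2 + max μ 0)
    gcongr
    exacts [mul_nonneg (ha n) (hbpos n).le, hden n μ]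

  have hYc_anti : Antitone Yc := by
    intro μ μ' hμ
    refine Summable.tsum_le_tsum (fun n => ?_) (hsumY μ') (hsumY μ)
    show a n / (b n ^ 2 + max μ' 0) ≤ a n / (b n ^ 2 + max μ 0)
    gcongr
    exacts [ha n, hden n μ]

  have hXc_strict : ∀ μ μ', 0 ≤ μ → μ < μ' → Xc μ' < Xc μ := by
    intro μ μ' hμ0 hμ
    refine Summable.tsum_lt_tsum (i := n₀) (fun n => ?_) ?_ (hsumX μ') (hsumX μ)
    · show a n * b n / (b n ^ 2 + max μ' 0) ≤ a n * b n / (b n ^ 2 + max μ 0)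
      gcongr
      exacts [mul_nonneg (ha n) (hbpos n).le, hden n μ]

    · have hm : max μ 0 < max μ' 0 := by
        rw [max_eq_left hμ0, max_eq_left (le_of_lt (lt_of_le_of_lt hμ0 hμ))]; exact hμ
      exact div_lt_div_of_pos_left (mul_pos hn₀pos (hbpos n₀)) (hden n₀ μ)
        (by linarith)
  have hYc_pos : ∀ μ, 0 < Yc μ :=
    fun μ => Summable.tsum_pos (hsumY μ) (fun n => hfY_nonneg n μ) n₀
      (div_pos hn₀pos (hden n₀ μ))
  have hXc_pos : ∀ μ, 0 < Xc μ :=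
    fun μ => Summable.tsum_pos (hsumX μ) (fun n => hfX_nonneg n μ) n₀
      (div_pos (mul_pos hn₀pos (hbpos n₀)) (hden n₀ μ))
  have hYc0_lt : Yc 0 < τ := by
    refine lt_of_le_of_lt ?_ hτ
    exact Summable.tsum_le_tsum (fun n => hfY_le n 0) (hsumY 0) hsum_aγ2
  have hXXc : ∀ μ, 0 ≤ μ → X μ = Xc μ := by
    intro μ hμ
    rw [hX μ]
    exact tsum_congr fun n => by simp only [hfXdef, max_eq_left hμ, hbdef]
  have hYYc : ∀ μ, 0 ≤ μ → Y μ = Yc μ := by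
    intro μ hμ
    rw [hY μ]
    exact tsum_congr fun n => by simp only [hfYdef, max_eq_left hμ, hbdef]
  have hτpos : 0 < τ :=
    lt_of_le_of_lt (tsum_nonneg fun n => div_nonneg (ha n) (sq_nonneg _)) hτ
  have hτY : 0 < τ - Y 0 := by rw [hYYc 0 le_rfl]; linarith [hYc0_lt]
  have hα₀pos : 0 < α₀ := by rw [hα₀]; exact div_pos hk₁ hτY
  have hτYc : τ - Yc 0 = k₁ / α₀ := by
    rw [hα₀, show Yc 0 = Y 0 from (hYYc 0 le_rfl).symm]
    rw [div_div_eq_mul_div, mul_comm, mul_div_assoc, div_self hk₁.ne', mul_one]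
  set F : ℝ → ℝ → ℝ := fun α l => Xc (l ^ 2) - ρ₀ + k₁ * (1 + α ^ 2 / (α ^ 2 + l ^ 2))
    with hFdef
  set G : ℝ → ℝ → ℝ := fun α l => Yc (l ^ 2) - τ + k₁ * α / (α ^ 2 + l ^ 2) with hGdef
  have hd2 : ∀ α l : ℝ, 0 < α → 0 < α ^ 2 + l ^ 2 := fun α l hα =>
    add_pos_of_pos_of_nonneg (pow_pos hα 2) (sq_nonneg l)
  have hd2' : ∀ α l : ℝ, 0 < l → 0 < α ^ 2 + l ^ 2 := fun α l hl =>
    add_pos_of_nonneg_of_pos (sq_nonneg α) (pow_pos hl 2)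
  have hlam₁' : ∀ α : ℝ, 0 < α → 0 < lam₁ α ∧ F α (lam₁ α) = 0 ∧
      ∀ l, 0 < l → F α l = 0 → l = lam₁ α := by
    intro α hα
    obtain ⟨hp, he, hu⟩ := hlam₁ α hα
    rw [hXXc _ (sq_nonneg _)] at he
    refine ⟨hp, by simp only [hFdef]; linarith, fun l hl hF0 => ?_⟩
    refine hu l hl ?_
    rw [hXXc _ (sq_nonneg _)]
    simp only [hFdef] at hF0
    linarith
  have hlam₂' : ∀ α ∈ Set.Ioo 0 α₀, 0 < lam₂ α ∧ G α (lam₂ α) = 0 ∧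
      ∀ l, 0 < l → G α l = 0 → l = lam₂ α := by
    intro α hα
    obtain ⟨hp, he, hu⟩ := hlam₂ α hα
    rw [hYYc _ (sq_nonneg _)] at he
    refine ⟨hp, by simp only [hGdef]; linarith, fun l hl hG0 => ?_⟩
    refine hu l hl ?_
    rw [hYYc _ (sq_nonneg _)]
    simp only [hGdef] at hG0
    linarith
  have hFcont : ∀ α : ℝ, 0 < α → Continuous (F α) := by
    intro α hα
    simp only [hFdef]
    have h1 : Continuous fun l : ℝ => Xc (l ^ 2) := hXc_cont.comp (continuous_pow 2)
    have h2 : Continuous fun l : ℝ => α ^ 2 / (α ^ 2 + l ^ 2) :=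
      continuous_const.div (continuous_const.add (continuous_pow 2))
        (fun l => (hd2 α l hα).ne')
    exact (h1.sub continuous_const).add (continuous_const.mul (continuous_const.add h2))
  have hFcontα : ∀ l : ℝ, 0 < l → Continuous fun β => F β l := by
    intro l hl
    simp only [hFdef]
    have h2 : Continuous fun β : ℝ => β ^ 2 / (β ^ 2 + l ^ 2) :=
      (continuous_pow 2).div ((continuous_pow 2).add continuous_const)
        (fun β => (hd2' β l hl).ne')
    exact continuous_const.add (continuous_const.mul (continuous_const.add h2))
  have hGcont : ∀ α : ℝ, 0 < α → Continuous (G α) := by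
    intro α hα
    simp only [hGdef]
    have h1 : Continuous fun l : ℝ => Yc (l ^ 2) := hYc_cont.comp (continuous_pow 2)
    have h2 : Continuous fun l : ℝ => k₁ * α / (α ^ 2 + l ^ 2) :=
      continuous_const.div (continuous_const.add (continuous_pow 2))
        (fun l => (hd2 α l hα).ne')
    exact (h1.sub continuous_const).add h2
  have hGcontα : ∀ l : ℝ, 0 < l → Continuous fun β => G β l := by
    intro l hl
    simp only [hGdef]
    have h2 : Continuous fun β : ℝ => k₁ * β / (β ^ 2 + l ^ 2) :=
      (continuous_const.mul continuous_id).div ((continuous_pow 2).add continuous_const)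
        (fun β => (hd2' β l hl).ne')
    exact continuous_const.add h2
  have hF_anti : ∀ α : ℝ, 0 < α → StrictAntiOn (F α) (Set.Ioi 0) := by
    intro α hα x hx y hy hxy
    simp only [Set.mem_Ioi] at hx hy
    have h1 : Xc (y ^ 2) ≤ Xc (x ^ 2) := hXc_anti (by nlinarith)
    have h2 : α ^ 2 / (α ^ 2 + y ^ 2) < α ^ 2 / (α ^ 2 + x ^ 2) :=
      div_lt_div_of_pos_left (pow_pos hα 2) (hd2 α x hα) (by nlinarith)
    simp only [hFdef]
    have h3 : (1 : ℝ) + α ^ 2 / (α ^ 2 + y ^ 2) < 1 + α ^ 2 / (α ^ 2 + x ^ 2) := by linarith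
    have h4 := mul_lt_mul_of_pos_left h3 hk₁
    linarith
  have hG_anti : ∀ α : ℝ, 0 < α → StrictAntiOn (G α) (Set.Ioi 0) := by
    intro α hα x hx y hy hxy
    simp only [Set.mem_Ioi] at hx hy
    have h1 : Yc (y ^ 2) ≤ Yc (x ^ 2) := hYc_anti (by nlinarith)
    have h2 : k₁ * α / (α ^ 2 + y ^ 2) < k₁ * α / (α ^ 2 + x ^ 2) :=
      div_lt_div_of_pos_left (mul_pos hk₁ hα) (hd2 α x hα) (by nlinarith)
    simp only [hGdef]
    linarith
  have hlam₁cont : ContinuousOn lam₁ (Set.Ioi 0) :=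
    hopf_root_cont (S := Set.Ioi 0) isOpen_Ioi F lam₁ (fun α hα => hlam₁' α hα)
      (fun α hα => hFcont α hα) (fun l hl => hFcontα l hl) (fun α hα => hF_anti α hα)
  have hlam₂cont : ContinuousOn lam₂ (Set.Ioo 0 α₀) :=
    hopf_root_cont (S := Set.Ioo 0 α₀) isOpen_Ioo G lam₂ hlam₂' (fun α hα => hGcont α hα.1)
      (fun l hl => hGcontα l hl) (fun α hα => hG_anti α hα.1)
  have hlam₁mono : ∀ α α' : ℝ, 0 < α → α < α' → lam₁ α < lam₁ α' := by
    intro α α' hα hαα'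
    have hα' : 0 < α' := hα.trans hαα'
    obtain ⟨hp, he, _⟩ := hlam₁' α hα
    obtain ⟨hp', he', _⟩ := hlam₁' α' hα'
    have hd1 := hd2 α (lam₁ α) hα
    have hd1' := hd2 α' (lam₁ α) hα'
    have hkey : α ^ 2 / (α ^ 2 + lam₁ α ^ 2) < α' ^ 2 / (α' ^ 2 + lam₁ α ^ 2) := by
      rw [div_lt_div_iff₀ hd1 hd1']
      have hsq : α ^ 2 < α' ^ 2 := by nlinarith
      nlinarith [mul_pos (pow_pos hp 2) (sub_pos.mpr hsq)]
    have hpos' : 0 < F α' (lam₁ α) := by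
      simp only [hFdef] at he ⊢
      have h3 := mul_lt_mul_of_pos_left
        (show (1 : ℝ) + α ^ 2 / (α ^ 2 + lam₁ α ^ 2)
            < 1 + α' ^ 2 / (α' ^ 2 + lam₁ α ^ 2) by linarith) hk₁
      linarith
    rcases lt_trichotomy (lam₁ α) (lam₁ α') with h | h | h
    · exact h
    · rw [h, he'] at hpos'; exact absurd hpos' (lt_irrefl 0)
    · have h5 := hF_anti α' hα' (Set.mem_Ioi.mpr hp') (Set.mem_Ioi.mpr hp) h
      rw [he'] at h5; linarith
  have hlam₁lt : ∀ α : ℝ, 0 < α → lam₁ α < α := by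
    intro α hα
    obtain ⟨hp, he, _⟩ := hlam₁' α hα
    have hXlt : Xc (α ^ 2) < Xc 0 := hXc_strict 0 (α ^ 2) le_rfl (pow_pos hα 2)
    have hX0 : Xc 0 = X 0 := (hXXc 0 le_rfl).symm
    have hhalf : α ^ 2 / (α ^ 2 + α ^ 2) = 1 / 2 := by
      rw [div_eq_div_iff (hd2 α α hα).ne' (two_ne_zero)]; ring
    have hFαα : F α α < 0 := by
      simp only [hFdef]
      rw [hhalf]
      have h6 : k₁ * (1 + 1 / 2 : ℝ) = 3 * k₁ / 2 := by ring
      rw [hX0] at hXlt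
      linarith
    rcases lt_trichotomy (lam₁ α) α with h | h | h
    · exact h
    · rw [h] at he; linarith
    · have h5 := hF_anti α hα (Set.mem_Ioi.mpr hα) (Set.mem_Ioi.mpr hp) h
      rw [he] at h5; linarith
  have hlam₂sq_le : ∀ α ∈ Set.Ioo 0 α₀, lam₂ α ^ 2 ≤ α * (α₀ - α) := by
    intro α hα
    obtain ⟨hp, he, _⟩ := hlam₂' α hα
    have hdl := hd2 α (lam₂ α) hα.1
    have hYle : Yc (lam₂ α ^ 2) ≤ Yc 0 := hYc_anti (sq_nonneg _)
    have hge : k₁ / α₀ ≤ k₁ * α / (α ^ 2 + lam₂ α ^ 2) := by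
      simp only [hGdef] at he
      linarith [hτYc]
    rw [div_le_div_iff₀ hα₀pos hdl] at hge
    have h5 : k₁ * (α ^ 2 + lam₂ α ^ 2) ≤ k₁ * (α * α₀) := by nlinarith
    have h6 := le_of_mul_le_mul_left h5 hk₁
    nlinarith
  have hlam₂sq_gt : ∀ α ∈ Set.Ioo 0 α₀, α * (k₁ / τ) - α ^ 2 < lam₂ α ^ 2 := by
    intro α hα
    obtain ⟨hp, he, _⟩ := hlam₂' α hα
    have hdl := hd2 α (lam₂ α) hα.1
    have hYpos := hYc_pos (lam₂ α ^ 2)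
    have hlt : k₁ * α / (α ^ 2 + lam₂ α ^ 2) < τ := by
      simp only [hGdef] at he; linarith
    rw [div_lt_iff₀ hdl] at hlt
    have h5 : α * (k₁ / τ) = k₁ * α / τ := by ring
    rw [h5, sub_lt_iff_lt_add, div_lt_iff₀ hτpos]
    nlinarith
  have hα₂pos : 0 < α₂ := hα₂.1
  have hsign_pos : ∀ β ∈ Set.Ioo 0 α₂, β < lam₂ β := by
    set β₁ := min α₂ (k₁ / (2 * τ)) / 2 with hβ₁def
    have hkτ : 0 < k₁ / (2 * τ) := div_pos hk₁ (by linarith)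
    have hβ₁pos : 0 < β₁ := div_pos (lt_min hα₂pos hkτ) two_pos
    have hβ₁lt : β₁ < α₂ := by
      have h := min_le_left α₂ (k₁ / (2 * τ)); simp only [hβ₁def]; linarith
    have hβ₁lt2 : β₁ < k₁ / (2 * τ) := by
      have h := min_le_right α₂ (k₁ / (2 * τ)); simp only [hβ₁def]; linarith
    have hβ₁mem : β₁ ∈ Set.Ioo 0 α₀ := ⟨hβ₁pos, hβ₁lt.trans hα₂.2⟩
    have hgt : β₁ < lam₂ β₁ := by
      have h5 := hlam₂sq_gt β₁ hβ₁mem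
      have h7 : 2 * β₁ < k₁ / τ := by
        rw [lt_div_iff₀ hτpos]
        rw [lt_div_iff₀ (by linarith : (0:ℝ) < 2 * τ)] at hβ₁lt2
        nlinarith
      have h6 : β₁ ^ 2 < lam₂ β₁ ^ 2 := by nlinarith
      exact lt_of_pow_lt_pow_left₀ 2 (hlam₂' β₁ hβ₁mem).1.le h6
    intro β hβ
    have hfneg := hopf_sign_neg (fun x => x - lam₂ x)
      ((continuous_id.continuousOn).sub
        (hlam₂cont.mono (Set.Ioo_subset_Ioo le_rfl hα₂.2.le)))
      (fun x hx hx0 => absurd (huniq x ⟨hx.1, hx.2.trans hα₂.2⟩ (sub_eq_zero.mp hx0).symm)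
        (ne_of_lt hx.2))
      (⟨hβ₁pos, hβ₁lt⟩ : β₁ ∈ Set.Ioo 0 α₂) hβ
      (show β₁ - lam₂ β₁ < 0 by linarith)
    have : β - lam₂ β < 0 := hfneg
    linarith
  have hLpos : 0 < lam₁ α₂ := (hlam₁' α₂ hα₂pos).1
  have hα₂α₀ := hα₂.2
  set α' := max ((α₂ + α₀) / 2) (α₀ - lam₁ α₂ ^ 2 / (2 * α₀)) with hα'def
  have hα'gt : α₂ < α' := lt_of_lt_of_le (by linarith) (le_max_left _ _)
  have hLsq : 0 < lam₁ α₂ ^ 2 / (2 * α₀) :=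
    div_pos (pow_pos hLpos 2) (by linarith)
  have hα'lt : α' < α₀ := max_lt (by linarith) (by linarith)
  have hα'ge : α₀ - lam₁ α₂ ^ 2 / (2 * α₀) ≤ α' := le_max_right _ _
  have hα'mem : α' ∈ Set.Ioo 0 α₀ := ⟨hα₂pos.trans hα'gt, hα'lt⟩
  have hlam₂α' : lam₂ α' < lam₁ α₂ := by
    have h5 := hlam₂sq_le α' hα'mem
    have h7 : α₀ - α' ≤ lam₁ α₂ ^ 2 / (2 * α₀) := by linarith
    have h6 : α' * (α₀ - α') ≤ α₀ * (lam₁ α₂ ^ 2 / (2 * α₀)) := by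
      nlinarith [hα'mem.1, hα₀pos, hα'lt]
    have hα₀ne : α₀ ≠ 0 := hα₀pos.ne'
    have h9 : α₀ * (lam₁ α₂ ^ 2 / (2 * α₀)) = lam₁ α₂ ^ 2 / 2 := by
      field_simp
    have h10 : lam₂ α' ^ 2 < lam₁ α₂ ^ 2 := by nlinarith [pow_pos hLpos 2]
    exact lt_of_pow_lt_pow_left₀ 2 hLpos.le h10
  have hlam₁α' : lam₁ α₂ < lam₁ α' := hlam₁mono α₂ α' hα₂pos hα'gt
  have hIccsub : Set.Icc α₂ α' ⊆ Set.Ioo 0 α₀ := fun x hx =>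
    ⟨lt_of_lt_of_le hα₂pos hx.1, lt_of_le_of_lt hx.2 hα'lt⟩
  have hgcont : ContinuousOn (fun x => lam₁ x - lam₂ x) (Set.Icc α₂ α') :=
    (hlam₁cont.mono fun x hx => Set.mem_Ioi.mpr (lt_of_lt_of_le hα₂pos hx.1)).sub
      (hlam₂cont.mono hIccsub)
  have hg1 : lam₁ α₂ - lam₂ α₂ < 0 := by
    rw [hfix]; linarith [hlam₁lt α₂ hα₂pos]
  have hg2 : 0 < lam₁ α' - lam₂ α' := by linarith
  obtain ⟨αs, hαsmem, hαs0⟩ := intermediate_value_Icc hα'gt.le hgcont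
    (Set.mem_Icc.mpr ⟨hg1.le, hg2.le⟩)
  have hαseq : lam₁ αs = lam₂ αs := sub_eq_zero.mp hαs0
  have hαsIoo : αs ∈ Set.Ioo 0 α₀ := hIccsub hαsmem
  have hint : ∀ β ∈ Set.Ioo 0 α₀, lam₁ β = lam₂ β → α₂ < β ∧ lam₁ β < β := by
    intro β hβ heq
    have hl := hlam₁lt β hβ.1
    refine ⟨?_, hl⟩
    rcases lt_trichotomy β α₂ with h | h | h
    · have h5 := hsign_pos β ⟨hβ.1, h⟩; rw [← heq] at h5; linarith
    · rw [h] at heq hl; rw [hfix] at heq; rw [heq] at hl; exact absurd hl (lt_irrefl _)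
    · exact h
  have hunique2 : ∀ β β', β ∈ Set.Ioo 0 α₀ → β' ∈ Set.Ioo 0 α₀ →
      lam₁ β = lam₂ β → lam₁ β' = lam₂ β' → β < β' → False := by
    intro β β' hβ hβ' heq heq' hββ'
    have hlβ : lam₂ β < β := by rw [← heq]; exact hlam₁lt β hβ.1
    obtain ⟨hp, he, _⟩ := hlam₂' β hβ
    obtain ⟨hp', he', _⟩ := hlam₂' β' hβ'
    have hdl := hd2' β (lam₂ β) hp
    have hdl' := hd2' β' (lam₂ β) hp
    have hl2 : lam₂ β ^ 2 < β * β' := by nlinarith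
    have hkey : k₁ * β' / (β' ^ 2 + lam₂ β ^ 2) < k₁ * β / (β ^ 2 + lam₂ β ^ 2) := by
      rw [div_lt_div_iff₀ hdl' hdl]
      nlinarith [mul_pos hk₁ (mul_pos (sub_pos.mpr hββ') (sub_pos.mpr hl2))]
    have hneg : G β' (lam₂ β) < 0 := by
      simp only [hGdef] at he ⊢; linarith
    rcases lt_trichotomy (lam₂ β) (lam₂ β') with h | h | h
    · have h5 := hG_anti β' hβ'.1 (Set.mem_Ioi.mpr hp) (Set.mem_Ioi.mpr hp') h
      rw [he'] at h5; linarith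
    · rw [h, he'] at hneg; exact absurd hneg (lt_irrefl 0)
    · have hm := hlam₁mono β β' hβ.1 hββ'
      rw [heq, heq'] at hm
      linarith
  refine ⟨⟨αs, ⟨hαsIoo, hαseq⟩, ?_⟩, hint⟩
  intro β hβ
  obtain ⟨hβmem, hβeq⟩ := hβ
  rcases lt_trichotomy β αs with h | h | h
  · exact (hunique2 β αs hβmem hαsIoo hβeq hαseq h).elim
  · exact h
  · exact (hunique2 αs β hαsIoo hβmem hαseq hβeq h).elim
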